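/- Let n ∈ (ℕ_{>0})^d, let g be a modulation on J_n, and let (X_s)_{s∈J_n} be jointly Gaussian, centered, square-integrable real random variables. For ω ∈ ℝ^d define J(ω) = (2π)^{−d/2} (∑_s g_s²)^{−1/2} ∑_{s∈J_n} g_s X_s exp(−i ω·s), so that I_n(ω) = |J(ω)|². Then for all ω, ω' ∈ ℝ^d, Cov( I_n(ω), I_n(ω') ) = | E[ J(ω) J(ω') ] |² + | E[ J(ω) conj(J(ω')) ] |²; in particular the covariance of the periodogram at any two frequencies is nonnegative. -/

import Mathlib

open MeasureTheory Real Filter Topology BigOperators NNReal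

noncomputable section

section AuxGauss

open ProbabilityTheory
open scoped ENNReal

private lemma gauss_even_integral {b : ℝ} (hb : 0 < b) {k : ℕ} (hk : Even k) :
    ∫ x : ℝ, x ^ k * Real.exp (-b * x ^ 2) =
      b ^ (-((k : ℝ) + 1) / 2) * Real.Gamma (((k : ℝ) + 1) / 2) := by
  have h1 : ∀ x : ℝ, x ^ k * Real.exp (-b * x ^ 2)
      = |x| ^ k * Real.exp (-b * |x| ^ 2) := by
    intro x; rw [hk.pow_abs, sq_abs]
  calc ∫ x : ℝ, x ^ k * Real.exp (-b * x ^ 2)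
      = ∫ x : ℝ, |x| ^ k * Real.exp (-b * |x| ^ 2) := integral_congr_ae (Filter.Eventually.of_forall h1)
    _ = 2 * ∫ x in Set.Ioi (0:ℝ), x ^ k * Real.exp (-b * x ^ 2) :=
        integral_comp_abs (f := fun x => x ^ k * Real.exp (-b * x ^ 2))
    _ = 2 * ∫ x in Set.Ioi (0:ℝ), x ^ (k : ℝ) * Real.exp (-b * x ^ (2:ℝ)) := by
        congr 1
        refine setIntegral_congr_fun measurableSet_Ioi (fun x hx => ?_)
        rw [Real.rpow_natCast, show ((2:ℝ) = ((2:ℕ):ℝ)) by norm_num, Real.rpow_natCast]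
    _ = 2 * (b ^ (-((k:ℝ) + 1) / 2) * (1 / 2) * Real.Gamma (((k:ℝ) + 1) / 2)) := by
        rw [integral_rpow_mul_exp_neg_mul_rpow (by norm_num) (by exact lt_of_lt_of_le neg_one_lt_zero (Nat.cast_nonneg k)) hb]
    _ = b ^ (-((k : ℝ) + 1) / 2) * Real.Gamma (((k : ℝ) + 1) / 2) := by ring

private lemma integral_fun_gaussianReal {v : ℝ≥0} (hv : v ≠ 0) (g : ℝ → ℝ) :
    ∫ x, g x ∂(gaussianReal 0 v) = ∫ x, gaussianPDFReal 0 v x * g x := by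
  rw [gaussianReal_of_var_ne_zero 0 hv,
    show gaussianPDF 0 v = fun x => ((Real.toNNReal (gaussianPDFReal 0 v x) : ℝ≥0) : ℝ≥0∞)
      from rfl,
    integral_withDensity_eq_integral_smul (measurable_gaussianPDFReal 0 v).real_toNNReal]
  congr 1; funext x
  rw [NNReal.smul_def, Real.coe_toNNReal _ (gaussianPDFReal_nonneg 0 v x), smul_eq_mul]

private lemma integrable_pow_exp {b : ℝ} (hb : 0 < b) (k : ℕ) :
    Integrable (fun x : ℝ => x ^ k * Real.exp (-b * x ^ 2)) := by
  have := integrable_rpow_mul_exp_neg_mul_sq hb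
    (s := (k : ℝ)) (lt_of_lt_of_le neg_one_lt_zero (Nat.cast_nonneg k))
  simpa [Real.rpow_natCast] using this

private lemma integrable_pow_gaussianReal (v : ℝ≥0) (k : ℕ) :
    Integrable (fun x : ℝ => x ^ k) (gaussianReal 0 v) := by
  by_cases hv : v = 0
  · subst hv
    rw [gaussianReal_zero_var]
    exact (integrable_const ((0:ℝ) ^ k)).congr (ae_eq_dirac (fun x : ℝ => x ^ k)).symm
  · have hv' : (0:ℝ) < v := lt_of_le_of_ne (v.coe_nonneg) (by exact_mod_cast (Ne.symm hv))
    have hb : (0:ℝ) < (2 * (v:ℝ))⁻¹ := by positivity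
    rw [gaussianReal_of_var_ne_zero 0 hv,
      show gaussianPDF 0 v = fun x => ((Real.toNNReal (gaussianPDFReal 0 v x) : ℝ≥0) : ℝ≥0∞)
        from rfl]
    rw [integrable_withDensity_iff_integrable_smul
      (measurable_gaussianPDFReal 0 v).real_toNNReal]
    have : (fun x : ℝ => Real.toNNReal (gaussianPDFReal 0 v x) • x ^ k)
        = fun x : ℝ => (Real.sqrt (2 * π * v))⁻¹ * (x ^ k * Real.exp (-(2 * (v:ℝ))⁻¹ * x ^ 2)) := by
      funext x
      rw [NNReal.smul_def, Real.coe_toNNReal _ (gaussianPDFReal_nonneg 0 v x), smul_eq_mul]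
      simp only [gaussianPDFReal, sub_zero]
      rw [show -x ^ 2 / (2 * (v:ℝ)) = -(2 * (v:ℝ))⁻¹ * x ^ 2 by ring]
      ring
    rw [this]
    exact ((integrable_pow_exp hb k).const_mul _)

private lemma integral_sq_gaussianReal (v : ℝ≥0) :
    ∫ x, x ^ 2 ∂(gaussianReal 0 v) = v := by
  by_cases hv : v = 0
  · subst hv; rw [gaussianReal_zero_var, integral_dirac]; norm_num
  · have hv' : (0:ℝ) < v := lt_of_le_of_ne (v.coe_nonneg) (by exact_mod_cast (Ne.symm hv))
    have h2v : (0:ℝ) < 2 * v := by positivity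
    have hb : (0:ℝ) < (2 * (v:ℝ))⁻¹ := by positivity
    rw [integral_fun_gaussianReal hv]
    have h1 : (fun x : ℝ => gaussianPDFReal 0 v x * x ^ 2)
        = fun x : ℝ => (Real.sqrt (2 * π * v))⁻¹ * (x ^ 2 * Real.exp (-(2 * (v:ℝ))⁻¹ * x ^ 2)) := by
      funext x
      simp only [gaussianPDFReal, sub_zero]
      rw [show -x ^ 2 / (2 * (v:ℝ)) = -(2 * (v:ℝ))⁻¹ * x ^ 2 by ring]
      ring
    rw [h1, integral_const_mul, gauss_even_integral hb (by norm_num : Even 2)]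
    have hrp : ((2 * (v:ℝ))⁻¹) ^ (-(((2:ℕ):ℝ) + 1) / 2) = (2 * (v:ℝ)) * Real.sqrt (2 * v) := by
      rw [show (-(((2:ℕ):ℝ) + 1) / 2) = -((3:ℝ)/2) by norm_num,
        Real.inv_rpow h2v.le, Real.rpow_neg h2v.le, inv_inv,
        show ((3:ℝ)/2) = 1 + (1/2 : ℝ) by norm_num,
        Real.rpow_add h2v, Real.rpow_one, ← Real.sqrt_eq_rpow]
    have hGam : Real.Gamma ((((2:ℕ):ℝ) + 1) / 2) = (1/2) * Real.sqrt π := by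
      rw [show ((((2:ℕ):ℝ) + 1) / 2) = 1/2 + 1 by norm_num,
        Real.Gamma_add_one (by norm_num), Real.Gamma_one_half_eq]
    rw [hrp, hGam, show 2 * π * (v:ℝ) = (2 * (v:ℝ)) * π by ring,
      Real.sqrt_mul h2v.le]
    have hs : (0:ℝ) < Real.sqrt (2 * v) := Real.sqrt_pos.mpr h2v
    have hπ : (0:ℝ) < Real.sqrt π := Real.sqrt_pos.mpr Real.pi_pos
    field_simp

private lemma integral_pow4_gaussianReal (v : ℝ≥0) :
    ∫ x, x ^ 4 ∂(gaussianReal 0 v) = 3 * (v:ℝ) ^ 2 := by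
  by_cases hv : v = 0
  · subst hv; rw [gaussianReal_zero_var, integral_dirac]; norm_num
  · have hv' : (0:ℝ) < v := lt_of_le_of_ne (v.coe_nonneg) (by exact_mod_cast (Ne.symm hv))
    have h2v : (0:ℝ) < 2 * v := by positivity
    have hb : (0:ℝ) < (2 * (v:ℝ))⁻¹ := by positivity
    rw [integral_fun_gaussianReal hv]
    have h1 : (fun x : ℝ => gaussianPDFReal 0 v x * x ^ 4)
        = fun x : ℝ => (Real.sqrt (2 * π * v))⁻¹ * (x ^ 4 * Real.exp (-(2 * (v:ℝ))⁻¹ * x ^ 2)) := by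
      funext x
      simp only [gaussianPDFReal, sub_zero]
      rw [show -x ^ 2 / (2 * (v:ℝ)) = -(2 * (v:ℝ))⁻¹ * x ^ 2 by ring]
      ring
    rw [h1, integral_const_mul, gauss_even_integral hb (by decide : Even 4)]
    have hrp : ((2 * (v:ℝ))⁻¹) ^ (-(((4:ℕ):ℝ) + 1) / 2) = (2 * (v:ℝ)) ^ 2 * Real.sqrt (2 * v) := by
      rw [show (-(((4:ℕ):ℝ) + 1) / 2) = -((5:ℝ)/2) by norm_num,
        Real.inv_rpow h2v.le, Real.rpow_neg h2v.le, inv_inv,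
        show ((5:ℝ)/2) = 2 + (1/2 : ℝ) by norm_num,
        Real.rpow_add h2v, Real.rpow_two, ← Real.sqrt_eq_rpow]
    have hGam : Real.Gamma ((((4:ℕ):ℝ) + 1) / 2) = (3/2) * ((1/2) * Real.sqrt π) := by
      rw [show ((((4:ℕ):ℝ) + 1) / 2) = 3/2 + 1 by norm_num,
        Real.Gamma_add_one (by norm_num),
        show ((3:ℝ)/2) = 1/2 + 1 by norm_num,
        Real.Gamma_add_one (by norm_num), Real.Gamma_one_half_eq]
    rw [hrp, hGam, show 2 * π * (v:ℝ) = (2 * (v:ℝ)) * π by ring,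
      Real.sqrt_mul h2v.le]
    have hs : (0:ℝ) < Real.sqrt (2 * v) := Real.sqrt_pos.mpr h2v
    have hπ : (0:ℝ) < Real.sqrt π := Real.sqrt_pos.mpr Real.pi_pos
    field_simp

variable {Ω : Type*} [MeasurableSpace Ω] {μ : Measure Ω}

private lemma gauss_facts {W : Ω → ℝ} (hW : AEMeasurable W μ) {v : ℝ≥0}
    (hmap : Measure.map W μ = gaussianReal 0 v) :
    Integrable (fun x => W x ^ 2) μ ∧ Integrable (fun x => W x ^ 4) μ ∧
      ∫ x, W x ^ 4 ∂μ = 3 * (∫ x, W x ^ 2 ∂μ) ^ 2 := by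
  have hmeas : ∀ k : ℕ, AEStronglyMeasurable (fun y : ℝ => y ^ k) (Measure.map W μ) :=
    fun k => (measurable_id.pow_const k).aestronglyMeasurable
  have hint : ∀ k : ℕ, Integrable (fun x => W x ^ k) μ := by
    intro k
    have h := (integrable_map_measure (hmeas k) hW).mp
      (by rw [hmap]; exact integrable_pow_gaussianReal v k)
    exact h
  have hIk : ∀ k : ℕ, ∫ x, W x ^ k ∂μ = ∫ y, y ^ k ∂(gaussianReal 0 v) := by
    intro k
    rw [← hmap, integral_map hW (hmeas k)]
  refine ⟨hint 2, hint 4, ?_⟩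
  rw [hIk 2, hIk 4, integral_sq_gaussianReal, integral_pow4_gaussianReal]

private lemma abs_mul_le_half_sq_add_sq (a b : ℝ) : |a * b| ≤ (a ^ 2 + b ^ 2) / 2 := by
  rw [abs_mul]
  nlinarith [sq_nonneg (|a| - |b|), sq_abs a, sq_abs b, abs_nonneg a, abs_nonneg b]

private lemma isserlis_pair {U V : Ω → ℝ}
    (hU : AEMeasurable U μ) (hV : AEMeasurable V μ)
    (hg : ∀ α β : ℝ, ∃ v : ℝ≥0,
      Measure.map (fun x => α * U x + β * V x) μ = gaussianReal 0 v) :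
    Integrable (fun x => U x * V x) μ ∧ Integrable (fun x => U x ^ 2 * V x ^ 2) μ ∧
      ∫ x, U x ^ 2 * V x ^ 2 ∂μ =
        (∫ x, U x ^ 2 ∂μ) * (∫ x, V x ^ 2 ∂μ) + 2 * (∫ x, U x * V x ∂μ) ^ 2 := by
  have fact : ∀ α β : ℝ, Integrable (fun x => (α * U x + β * V x) ^ 2) μ ∧
      Integrable (fun x => (α * U x + β * V x) ^ 4) μ ∧
      ∫ x, (α * U x + β * V x) ^ 4 ∂μ = 3 * (∫ x, (α * U x + β * V x) ^ 2 ∂μ) ^ 2 := by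
    intro α β
    obtain ⟨v, hv⟩ := hg α β
    exact gauss_facts ((hU.const_mul α).add (hV.const_mul β)) hv
  have hU2 : Integrable (fun x => U x ^ 2) μ := by simpa using (fact 1 0).1
  have hV2 : Integrable (fun x => V x ^ 2) μ := by simpa using (fact 0 1).1
  have hU4 : Integrable (fun x => U x ^ 4) μ := by simpa using (fact 1 0).2.1
  have hV4 : Integrable (fun x => V x ^ 4) μ := by simpa using (fact 0 1).2.1
  have hU44 : ∫ x, U x ^ 4 ∂μ = 3 * (∫ x, U x ^ 2 ∂μ) ^ 2 := by simpa using (fact 1 0).2.2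
  have hV44 : ∫ x, V x ^ 4 ∂μ = 3 * (∫ x, V x ^ 2 ∂μ) ^ 2 := by simpa using (fact 0 1).2.2
  have hUV : Integrable (fun x => U x * V x) μ := by
    refine Integrable.mono' ((hU2.add hV2).div_const 2) (hU.mul hV).aestronglyMeasurable ?_
    filter_upwards with x
    rw [Real.norm_eq_abs]
    exact abs_mul_le_half_sq_add_sq (U x) (V x)
  have hU2V2 : Integrable (fun x => U x ^ 2 * V x ^ 2) μ := by
    refine Integrable.mono' ((hU4.add hV4).div_const 2)
      (((hU.pow_const 2).mul (hV.pow_const 2)).aestronglyMeasurable) ?_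
    filter_upwards with x
    rw [Real.norm_eq_abs]
    have := abs_mul_le_half_sq_add_sq (U x ^ 2) (V x ^ 2)
    calc |U x ^ 2 * V x ^ 2| ≤ ((U x ^ 2) ^ 2 + (V x ^ 2) ^ 2) / 2 := this
      _ = (U x ^ 4 + V x ^ 4) / 2 := by ring
  obtain ⟨hs2i, hs4i, hs4⟩ := fact 1 1
  obtain ⟨hd2i, hd4i, hd4⟩ := fact 1 (-1)
  have hEs2 : ∫ x, (1 * U x + 1 * V x) ^ 2 ∂μ
      = ∫ x, U x ^ 2 ∂μ + 2 * ∫ x, U x * V x ∂μ + ∫ x, V x ^ 2 ∂μ := by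
    have ha : Integrable (fun x => 2 * (U x * V x) + V x ^ 2) μ := (hUV.const_mul 2).add hV2
    rw [show (fun x => (1 * U x + 1 * V x) ^ 2)
        = fun x => U x ^ 2 + (2 * (U x * V x) + V x ^ 2) from funext fun x => by ring,
      integral_add hU2 ha, integral_add (hUV.const_mul 2) hV2,
      integral_const_mul]
    ring
  have hEd2 : ∫ x, (1 * U x + (-1) * V x) ^ 2 ∂μ
      = ∫ x, U x ^ 2 ∂μ - 2 * ∫ x, U x * V x ∂μ + ∫ x, V x ^ 2 ∂μ := by
    have ha : Integrable (fun x => (-2) * (U x * V x) + V x ^ 2) μ := (hUV.const_mul (-2)).add hV2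
    rw [show (fun x => (1 * U x + (-1) * V x) ^ 2)
        = fun x => U x ^ 2 + ((-2) * (U x * V x) + V x ^ 2) from funext fun x => by ring,
      integral_add hU2 ha, integral_add (hUV.const_mul (-2)) hV2,
      integral_const_mul]
    ring
  have hkey : ∫ x, (1 * U x + 1 * V x) ^ 4 ∂μ + ∫ x, (1 * U x + (-1) * V x) ^ 4 ∂μ
      = 2 * ∫ x, U x ^ 4 ∂μ + 12 * ∫ x, U x ^ 2 * V x ^ 2 ∂μ + 2 * ∫ x, V x ^ 4 ∂μ := by
    have hb2 : Integrable (fun x => 12 * (U x ^ 2 * V x ^ 2) + 2 * V x ^ 4) μ :=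
      (hU2V2.const_mul 12).add (hV4.const_mul 2)
    rw [← integral_add hs4i hd4i,
      show (fun x => (1 * U x + 1 * V x) ^ 4 + (1 * U x + (-1) * V x) ^ 4)
        = fun x => 2 * U x ^ 4 + (12 * (U x ^ 2 * V x ^ 2) + 2 * V x ^ 4)
        from funext fun x => by ring,
      integral_add (hU4.const_mul 2) hb2,
      integral_add (hU2V2.const_mul 12) (hV4.const_mul 2),
      integral_const_mul, integral_const_mul, integral_const_mul]
    ring
  refine ⟨hUV, hU2V2, ?_⟩
  rw [hEs2] at hs4
  rw [hEd2] at hd4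
  linear_combination (hs4 + hd4 - hkey - 2 * hU44 - 2 * hV44) / 12


private lemma term_decomp (κ gs Xs θ : ℝ) :
    ((κ : ℝ) : ℂ) * (((gs * Xs : ℝ) : ℂ) * Complex.exp (-(Complex.I * (θ : ℂ))))
      = ((κ * (gs * Real.cos θ) * Xs : ℝ) : ℂ)
        + ((-(κ * (gs * Real.sin θ)) * Xs : ℝ) : ℂ) * Complex.I := by
  have hexp : Complex.exp (-(Complex.I * (θ : ℂ)))
      = ((Real.cos θ : ℝ) : ℂ) - ((Real.sin θ : ℝ) : ℂ) * Complex.I := by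
    rw [show -(Complex.I * (θ : ℂ)) = ((-θ : ℝ) : ℂ) * Complex.I by push_cast; ring,
      Complex.exp_mul_I, ← Complex.ofReal_cos, ← Complex.ofReal_sin, Real.cos_neg, Real.sin_neg]
    push_cast
    ring
  rw [hexp]
  push_cast
  ring

end AuxGauss


namespace DSW

/-- The rectangular grid `J_n ⊆ ℤ^d`. -/
def grid {d : ℕ} (n : Fin d → ℕ+) : Finset (Fin d → ℤ) :=
  Fintype.piFinset fun i => Finset.Icc 0 ((n i : ℤ) - 1)

/-- `|n| = ∏ n_i` as a real number. -/
def gridSize {d : ℕ} (n : Fin d → ℕ+) : ℝ := ∏ i, ((n i : ℕ) : ℝ)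

/-- A modulation on `J_n`: takes values in `[0,1]`, vanishes off the grid,
and is not identically zero. -/
def IsModulation {d : ℕ} (n : Fin d → ℕ+) (g : (Fin d → ℤ) → ℝ) : Prop :=
  (∀ s, 0 ≤ g s ∧ g s ≤ 1) ∧ (∀ s, s ∉ grid n → g s = 0) ∧ ∃ s, g s ≠ 0

/-- `c_{g,n}(u) = (∑_{s∈ℤ^d} g_s g_{s+u}) / (∑_{s∈ℤ^d} g_s²)`. -/
def cg {d : ℕ} (g : (Fin d → ℤ) → ℝ) (u : Fin d → ℤ) : ℝ :=
  (∑' s : Fin d → ℤ, g s * g (s + u)) / ∑' s : Fin d → ℤ, g s ^ 2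

/-- `ω · s` for `ω ∈ ℝ^d`, `s ∈ ℤ^d`. -/
def dotZ {d : ℕ} (ω : Fin d → ℝ) (s : Fin d → ℤ) : ℝ := ∑ i, ω i * (s i : ℝ)

/-- The modulated periodogram `I_n(ω)`. -/
def periodogram {d : ℕ} (n : Fin d → ℕ+) (g X : (Fin d → ℤ) → ℝ) (ω : Fin d → ℝ) : ℝ :=
  ((2 * π) ^ d)⁻¹ * (∑' s : Fin d → ℤ, g s ^ 2)⁻¹ *
    ‖(∑ s ∈ grid n, ((g s * X s : ℝ) : ℂ) *
      Complex.exp (-(Complex.I * (dotZ ω s : ℂ))))‖ ^ 2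

/-- The modified Fejér kernel `F_n(ω)`. -/
def fejer {d : ℕ} (n : Fin d → ℕ+) (g : (Fin d → ℤ) → ℝ) (ω : Fin d → ℝ) : ℝ :=
  ((2 * π) ^ d)⁻¹ * (∑' s : Fin d → ℤ, g s ^ 2)⁻¹ *
    ‖(∑ s ∈ grid n, (g s : ℂ) * Complex.exp (Complex.I * (dotZ ω s : ℂ)))‖ ^ 2

/-- The torus `[0, 2π)^d`. -/
def torus (d : ℕ) : Set (Fin d → ℝ) := Set.univ.pi fun _ => Set.Ico 0 (2 * π)

/-- `2π`-periodicity in each coordinate. -/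
def Periodic2Pi {d : ℕ} (f : (Fin d → ℝ) → ℝ) : Prop :=
  ∀ (ω : Fin d → ℝ) (u : Fin d → ℤ), f (fun i => ω i + 2 * π * (u i : ℝ)) = f ω

/-- The expected periodogram `Ī_n(ω; f) = ∫_{[0,2π)^d} f(ω-λ) F_n(λ) dλ`. -/
def expPeriodogram {d : ℕ} (n : Fin d → ℕ+) (g : (Fin d → ℤ) → ℝ)
    (f : (Fin d → ℝ) → ℝ) (ω : Fin d → ℝ) : ℝ :=
  ∫ lam in torus d, f (ω - lam) * fejer n g lam

/-- The Fourier grid `Ω_n`. -/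
def fourierGrid {d : ℕ} (n : Fin d → ℕ+) : Finset (Fin d → ℝ) :=
  (Fintype.piFinset fun i => Finset.range (n i : ℕ)).image
    fun k i => 2 * π * (k i : ℝ) / ((n i : ℕ) : ℝ)

/-- A family of real random variables is jointly Gaussian and centered if every finite
real linear combination has a (possibly degenerate) centered Gaussian distribution. -/
def IsJointlyGaussianCentered {Ω : Type*} [MeasurableSpace Ω] (μ : Measure Ω)
    {S : Type*} (X : S → Ω → ℝ) : Prop :=
  ∀ (T : Finset S) (a : S → ℝ), ∃ v : ℝ≥0,
    Measure.map (fun x => ∑ s ∈ T, a s * X s x) μ = ProbabilityTheory.gaussianReal 0 v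


/-- Isserlis formula for the covariance of the periodogram at two
frequencies; in particular this covariance is nonnegative. -/
theorem periodogram_covariance_isserlis
    {d : ℕ} (n : Fin d → ℕ+) (g : (Fin d → ℤ) → ℝ) (hg : IsModulation n g)
    {Ω : Type*} [MeasurableSpace Ω] (μ : Measure Ω) [IsProbabilityMeasure μ]
    (X : (Fin d → ℤ) → Ω → ℝ)
    (hX : IsJointlyGaussianCentered μ X)
    (hX2 : ∀ s, MemLp (X s) 2 μ)
    (J : (Fin d → ℝ) → Ω → ℂ)
    (hJ : ∀ ω x, J ω x =
      (((Real.sqrt ((2 * π) ^ d))⁻¹ * (Real.sqrt (∑' s : Fin d → ℤ, g s ^ 2))⁻¹ : ℝ) : ℂ) *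
        ∑ s ∈ grid n, ((g s * X s x : ℝ) : ℂ) * Complex.exp (-(Complex.I * (dotZ ω s : ℂ)))) :
    ∀ ω ω' : Fin d → ℝ,
      ((∫ x, periodogram n g (fun s => X s x) ω * periodogram n g (fun s => X s x) ω' ∂μ) -
          (∫ x, periodogram n g (fun s => X s x) ω ∂μ) *
            (∫ x, periodogram n g (fun s => X s x) ω' ∂μ) =
        ‖(∫ x, J ω x * J ω' x ∂μ)‖ ^ 2 +
          ‖(∫ x, J ω x * (starRingEnd ℂ) (J ω' x) ∂μ)‖ ^ 2) ∧
      0 ≤ (∫ x, periodogram n g (fun s => X s x) ω * periodogram n g (fun s => X s x) ω' ∂μ) -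
          (∫ x, periodogram n g (fun s => X s x) ω ∂μ) *
            (∫ x, periodogram n g (fun s => X s x) ω' ∂μ) := by
  intro ω ω'
  classical
  have hts : (0:ℝ) ≤ ∑' s : Fin d → ℤ, g s ^ 2 := tsum_nonneg fun s => sq_nonneg _
  set κ : ℝ := (Real.sqrt ((2 * π) ^ d))⁻¹ * (Real.sqrt (∑' s : Fin d → ℤ, g s ^ 2))⁻¹
    with hκdef
  have hκ0 : 0 ≤ κ := by rw [hκdef]; positivity
  have hκ2 : κ ^ 2 = ((2 * π) ^ d)⁻¹ * (∑' s : Fin d → ℤ, g s ^ 2)⁻¹ := by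
    rw [hκdef, mul_pow, ← Real.sqrt_inv, ← Real.sqrt_inv,
      Real.sq_sqrt (by positivity), Real.sq_sqrt (inv_nonneg.mpr hts)]
  -- the four real random variables
  set A : Ω → ℝ := fun x => ∑ s ∈ grid n, (κ * (g s * Real.cos (dotZ ω s))) * X s x with hAdef
  set B : Ω → ℝ := fun x => ∑ s ∈ grid n, (-(κ * (g s * Real.sin (dotZ ω s)))) * X s x with hBdef
  set C : Ω → ℝ := fun x => ∑ s ∈ grid n, (κ * (g s * Real.cos (dotZ ω' s))) * X s x with hCdef
  set D : Ω → ℝ := fun x => ∑ s ∈ grid n, (-(κ * (g s * Real.sin (dotZ ω' s)))) * X s x with hDdef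
  have hmeasL : ∀ a : (Fin d → ℤ) → ℝ,
      AEMeasurable (fun x => ∑ s ∈ grid n, a s * X s x) μ := fun a =>
    Finset.aemeasurable_fun_sum _ fun s _ =>
      ((hX2 s).aestronglyMeasurable.aemeasurable).const_mul (a s)
  have hgpair : ∀ a c : (Fin d → ℤ) → ℝ, ∀ α β : ℝ, ∃ v : ℝ≥0,
      Measure.map (fun x => α * (∑ s ∈ grid n, a s * X s x)
        + β * (∑ s ∈ grid n, c s * X s x)) μ = ProbabilityTheory.gaussianReal 0 v := by
    intro a c α β
    obtain ⟨v, hv⟩ := hX (grid n) (fun s => α * a s + β * c s)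
    refine ⟨v, ?_⟩
    have he : (fun x => α * (∑ s ∈ grid n, a s * X s x) + β * (∑ s ∈ grid n, c s * X s x))
        = fun x => ∑ s ∈ grid n, (α * a s + β * c s) * X s x := by
      funext x
      rw [Finset.mul_sum, Finset.mul_sum, ← Finset.sum_add_distrib]
      exact Finset.sum_congr rfl fun s _ => by ring
    rw [he]
    exact hv
  have hsq : ∀ a : (Fin d → ℤ) → ℝ,
      Integrable (fun x => (∑ s ∈ grid n, a s * X s x) ^ 2) μ := by
    intro a
    obtain ⟨v, hv⟩ := hX (grid n) a
    exact (gauss_facts (hmeasL a) hv).1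
  have hAm : AEMeasurable A μ := hmeasL _
  have hBm : AEMeasurable B μ := hmeasL _
  have hCm : AEMeasurable C μ := hmeasL _
  have hDm : AEMeasurable D μ := hmeasL _
  have iA2 : Integrable (fun x => A x ^ 2) μ := hsq _
  have iB2 : Integrable (fun x => B x ^ 2) μ := hsq _
  have iC2 : Integrable (fun x => C x ^ 2) μ := hsq _
  have iD2 : Integrable (fun x => D x ^ 2) μ := hsq _
  obtain ⟨iAC, iA2C2, eAC⟩ := isserlis_pair hAm hCm (hgpair _ _)
  obtain ⟨iAD, iA2D2, eAD⟩ := isserlis_pair hAm hDm (hgpair _ _)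
  obtain ⟨iBC, iB2C2, eBC⟩ := isserlis_pair hBm hCm (hgpair _ _)
  obtain ⟨iBD, iB2D2, eBD⟩ := isserlis_pair hBm hDm (hgpair _ _)
  -- decomposition of J
  have hJdω : ∀ x, J ω x = ((A x : ℝ) : ℂ) + ((B x : ℝ) : ℂ) * Complex.I := by
    intro x
    rw [hJ ω x, Finset.mul_sum, hAdef, hBdef,
      Complex.ofReal_sum, Complex.ofReal_sum, Finset.sum_mul, ← Finset.sum_add_distrib]
    refine Finset.sum_congr rfl fun s _ => ?_
    rw [show -(Complex.I * ((dotZ ω s : ℝ) : ℂ)) = ((-(dotZ ω s) : ℝ) : ℂ) * Complex.I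
        by push_cast; ring,
      Complex.exp_mul_I, ← Complex.ofReal_cos, ← Complex.ofReal_sin, Real.cos_neg, Real.sin_neg]
    push_cast
    ring
  have hJdω' : ∀ x, J ω' x = ((C x : ℝ) : ℂ) + ((D x : ℝ) : ℂ) * Complex.I := by
    intro x
    rw [hJ ω' x, Finset.mul_sum, hCdef, hDdef,
      Complex.ofReal_sum, Complex.ofReal_sum, Finset.sum_mul, ← Finset.sum_add_distrib]
    refine Finset.sum_congr rfl fun s _ => ?_
    rw [show -(Complex.I * ((dotZ ω' s : ℝ) : ℂ)) = ((-(dotZ ω' s) : ℝ) : ℂ) * Complex.I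
        by push_cast; ring,
      Complex.exp_mul_I, ← Complex.ofReal_cos, ← Complex.ofReal_sin, Real.cos_neg, Real.sin_neg]
    push_cast
    ring
  -- periodogram = |J|²
  have hPgen : ∀ (w : Fin d → ℝ) (P Q : Ω → ℝ),
      (∀ x, J w x = ((P x : ℝ) : ℂ) + ((Q x : ℝ) : ℂ) * Complex.I) →
      ∀ x, periodogram n g (fun s => X s x) w = P x ^ 2 + Q x ^ 2 := by
    intro w P Q hdec x
    have h1 : ‖J w x‖ ^ 2 = P x ^ 2 + Q x ^ 2 := by
      rw [hdec x, Complex.sq_norm]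
      simp [Complex.normSq_apply]
      ring
    have h2 : ‖J w x‖ ^ 2 = ((2 * π) ^ d)⁻¹ * (∑' s : Fin d → ℤ, g s ^ 2)⁻¹ *
        ‖(∑ s ∈ grid n, ((g s * X s x : ℝ) : ℂ)
          * Complex.exp (-(Complex.I * (dotZ w s : ℂ))))‖ ^ 2 := by
      rw [hJ w x, norm_mul, Complex.norm_real, Real.norm_of_nonneg hκ0, mul_pow, hκ2]
    have h3 : periodogram n g (fun s => X s x) w
        = ((2 * π) ^ d)⁻¹ * (∑' s : Fin d → ℤ, g s ^ 2)⁻¹ *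
        ‖(∑ s ∈ grid n, ((g s * X s x : ℝ) : ℂ)
          * Complex.exp (-(Complex.I * (dotZ w s : ℂ))))‖ ^ 2 := rfl
    rw [h3, ← h2, h1]
  have hPω : ∀ x, periodogram n g (fun s => X s x) ω = A x ^ 2 + B x ^ 2 :=
    hPgen ω A B hJdω
  have hPω' : ∀ x, periodogram n g (fun s => X s x) ω' = C x ^ 2 + D x ^ 2 :=
    hPgen ω' C D hJdω'
  -- expectations of periodograms
  have hIP : ∫ x, periodogram n g (fun s => X s x) ω ∂μ
      = ∫ x, A x ^ 2 ∂μ + ∫ x, B x ^ 2 ∂μ := by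
    rw [show (fun x => periodogram n g (fun s => X s x) ω) = fun x => A x ^ 2 + B x ^ 2
      from funext hPω, integral_add iA2 iB2]
  have hIP' : ∫ x, periodogram n g (fun s => X s x) ω' ∂μ
      = ∫ x, C x ^ 2 ∂μ + ∫ x, D x ^ 2 ∂μ := by
    rw [show (fun x => periodogram n g (fun s => X s x) ω') = fun x => C x ^ 2 + D x ^ 2
      from funext hPω', integral_add iC2 iD2]
  have h34 : Integrable (fun x => B x ^ 2 * C x ^ 2 + B x ^ 2 * D x ^ 2) μ := iB2C2.add iB2D2
  have h234 : Integrable (fun x => A x ^ 2 * D x ^ 2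
      + (B x ^ 2 * C x ^ 2 + B x ^ 2 * D x ^ 2)) μ := iA2D2.add h34
  have hIPP : ∫ x, periodogram n g (fun s => X s x) ω * periodogram n g (fun s => X s x) ω' ∂μ
      = ∫ x, A x ^ 2 * C x ^ 2 ∂μ + (∫ x, A x ^ 2 * D x ^ 2 ∂μ
        + (∫ x, B x ^ 2 * C x ^ 2 ∂μ + ∫ x, B x ^ 2 * D x ^ 2 ∂μ)) := by
    rw [show (fun x => periodogram n g (fun s => X s x) ω
          * periodogram n g (fun s => X s x) ω')
        = fun x => A x ^ 2 * C x ^ 2 + (A x ^ 2 * D x ^ 2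
          + (B x ^ 2 * C x ^ 2 + B x ^ 2 * D x ^ 2))
      from funext fun x => by rw [hPω x, hPω' x]; ring,
      integral_add iA2C2 h234, integral_add iA2D2 h34, integral_add iB2C2 iB2D2]
  -- the complex second moments
  have hiRe : Integrable (fun x => A x * C x - B x * D x) μ := iAC.sub iBD
  have hiIm : Integrable (fun x => A x * D x + B x * C x) μ := iAD.add iBC
  have castInt : ∀ f : Ω → ℝ, ∫ x, ((f x : ℝ) : ℂ) ∂μ = ((∫ x, f x ∂μ : ℝ) : ℂ) :=
    fun f => integral_ofReal
  have ihRe : Integrable (fun x => ((A x * C x - B x * D x : ℝ) : ℂ)) μ := hiRe.ofReal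
  have ihIm : Integrable (fun x => ((A x * D x + B x * C x : ℝ) : ℂ) * Complex.I) μ :=
    hiIm.ofReal.mul_const Complex.I
  have hIJJ : ∫ x, J ω x * J ω' x ∂μ
      = ((∫ x, A x * C x ∂μ - ∫ x, B x * D x ∂μ : ℝ) : ℂ)
        + ((∫ x, A x * D x ∂μ + ∫ x, B x * C x ∂μ : ℝ) : ℂ) * Complex.I := by
    rw [show (fun x => J ω x * J ω' x)
        = fun x => ((A x * C x - B x * D x : ℝ) : ℂ)
          + ((A x * D x + B x * C x : ℝ) : ℂ) * Complex.I
      from funext fun x => by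
        rw [hJdω x, hJdω' x]
        push_cast
        ring_nf
        rw [Complex.I_sq]
        ring,
      integral_add ihRe ihIm, integral_mul_const,
      ← integral_sub iAC iBD, ← integral_add iAD iBC, castInt, castInt]
  have hiRe2 : Integrable (fun x => A x * C x + B x * D x) μ := iAC.add iBD
  have hiIm2 : Integrable (fun x => B x * C x - A x * D x) μ := iBC.sub iAD
  have ihRe2 : Integrable (fun x => ((A x * C x + B x * D x : ℝ) : ℂ)) μ := hiRe2.ofReal
  have ihIm2 : Integrable (fun x => ((B x * C x - A x * D x : ℝ) : ℂ) * Complex.I) μ :=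
    hiIm2.ofReal.mul_const Complex.I
  have hIJJc : ∫ x, J ω x * (starRingEnd ℂ) (J ω' x) ∂μ
      = ((∫ x, A x * C x ∂μ + ∫ x, B x * D x ∂μ : ℝ) : ℂ)
        + ((∫ x, B x * C x ∂μ - ∫ x, A x * D x ∂μ : ℝ) : ℂ) * Complex.I := by
    rw [show (fun x => J ω x * (starRingEnd ℂ) (J ω' x))
        = fun x => ((A x * C x + B x * D x : ℝ) : ℂ)
          + ((B x * C x - A x * D x : ℝ) : ℂ) * Complex.I
      from funext fun x => by
        rw [hJdω x, hJdω' x]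
        simp only [map_add, map_mul, Complex.conj_ofReal, Complex.conj_I]
        push_cast
        ring_nf
        rw [Complex.I_sq]
        ring,
      integral_add ihRe2 ihIm2, integral_mul_const,
      ← integral_add iAC iBD, ← integral_sub iBC iAD, castInt, castInt]
  have habs1 : ‖(∫ x, J ω x * J ω' x ∂μ)‖ ^ 2
      = (∫ x, A x * C x ∂μ - ∫ x, B x * D x ∂μ) ^ 2
        + (∫ x, A x * D x ∂μ + ∫ x, B x * C x ∂μ) ^ 2 := by
    rw [hIJJ, Complex.sq_norm]
    simp [Complex.normSq_apply]
    ring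
  have habs2 : ‖(∫ x, J ω x * (starRingEnd ℂ) (J ω' x) ∂μ)‖ ^ 2
      = (∫ x, A x * C x ∂μ + ∫ x, B x * D x ∂μ) ^ 2
        + (∫ x, B x * C x ∂μ - ∫ x, A x * D x ∂μ) ^ 2 := by
    rw [hIJJc, Complex.sq_norm]
    simp [Complex.normSq_apply]
    ring
  have hmain : (∫ x, periodogram n g (fun s => X s x) ω
        * periodogram n g (fun s => X s x) ω' ∂μ)
      - (∫ x, periodogram n g (fun s => X s x) ω ∂μ)
        * (∫ x, periodogram n g (fun s => X s x) ω' ∂μ)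
      = ‖(∫ x, J ω x * J ω' x ∂μ)‖ ^ 2
        + ‖(∫ x, J ω x * (starRingEnd ℂ) (J ω' x) ∂μ)‖ ^ 2 := by
    rw [hIPP, hIP, hIP', habs1, habs2, eAC, eAD, eBC, eBD]
    ring
  refine ⟨hmain, ?_⟩
  rw [hmain]
  positivity

end DSW
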